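/- Let G be a finite tree rooted at r, and for each vertex v let G_v be the subtree rooted at v. Define c(v) = 0 if v is a leaf of G_v (has no children), and otherwise c(v) = 1 + (sum of c(v_i) over all children v_i of v) − min_i c(v_i). Then c(v) equals the maximum size of a core of G_v containing v, where a core of G_v is a subset X with G_v[X] connected and every x ∈ X having a neighbor in G_v outside X (and c(v)=0 means no such core exists). -/

import Mathlib

open scoped Classical

/-- The vertex set of the subtree of the tree `G`, rooted at `r`, below `v`:
those `u` such that `v` lies on the path from `r` to `u`. -/
def subtreeSet {V : Type*} (G : SimpleGraph V) (r v : V) : Set V :=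
  {u | G.dist r u = G.dist r v + G.dist v u}

/-- The children of `v` in the tree `G` rooted at `r`. -/
noncomputable def children {V : Type*} [Fintype V] (G : SimpleGraph V) (r v : V) :
    Finset V :=
  Finset.univ.filter fun u => G.Adj v u ∧ G.dist r u = G.dist r v + 1

/-- The possible sizes of cores of the subtree `G_v` containing `v`:
`X ⊆ G_v`, `v ∈ X`, `X` induces a connected subgraph, and every vertex of `X`
has a neighbor inside `G_v` but outside `X`. -/
def coreSizes {V : Type*} (G : SimpleGraph V) (r v : V) : Set ℕ :=
  { n | ∃ X : Finset V, (X : Set V) ⊆ subtreeSet G r v ∧ v ∈ X ∧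
      (G.induce (X : Set V)).Connected ∧
      (∀ x ∈ X, ∃ y ∈ subtreeSet G r v, y ∉ X ∧ G.Adj x y) ∧
      X.card = n }

namespace CoreRecAux

open SimpleGraph

variable {V : Type*} {G : SimpleGraph V} {r : V}

lemma mem_subtree_self (v : V) : v ∈ subtreeSet G r v := by
  simp [subtreeSet]

lemma crossing_lemma {s t : Set V} :
    ∀ (y z : ↥s) (_ : (G.induce s).Walk y z), y.1 ∈ t → z.1 ∉ t →
      ∃ b ∈ s, b ∈ t ∧ ∃ c ∈ s, c ∉ t ∧ G.Adj b c := by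
  intro y z p
  induction p with
  | nil => intro h1 h2; exact absurd h1 h2
  | @cons a b _ h q ih =>
    intro hat hzt
    by_cases hbt : b.1 ∈ t
    · exact ih hbt hzt
    · exact ⟨a.1, a.2, hat, b.1, b.2, hbt, h⟩

lemma restrict_lemma {s t : Set V} {a : V} (hat : a ∈ t)
    (hedge : ∀ x ∈ t, ∀ y ∈ s, y ∉ t → G.Adj x y → x = a) :
    ∀ (y z : ↥s) (_ : (G.induce s).Walk y z) (hyt : y.1 ∈ t), z.1 = a →
      (G.induce t).Reachable ⟨y.1, hyt⟩ ⟨a, hat⟩ := by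
  intro y z p
  induction p with
  | nil =>
    intro hyt hz
    subst hz
    exact Reachable.refl _
  | @cons x b _ h q ih =>
    intro hxt hz
    by_cases hbt : b.1 ∈ t
    · exact (Adj.reachable (show (G.induce t).Adj ⟨x.1, hxt⟩ ⟨b.1, hbt⟩ from h)).trans
        (ih hbt hz)
    · have hxa : x.1 = a := hedge _ hxt _ b.2 hbt h
      have : (⟨x.1, hxt⟩ : ↥t) = ⟨a, hat⟩ := Subtype.ext hxa
      rw [this]

lemma induce_singleton_connected (v : V) : (G.induce {v}).Connected := by
  rw [connected_iff_exists_forall_reachable]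
  refine ⟨⟨v, rfl⟩, ?_⟩
  rintro ⟨w, hw⟩
  have : w = v := hw
  subst this
  exact Reachable.refl _

section Tree

variable [Fintype V] (hG : G.IsTree)
include hG

lemma tri (a b c : V) : G.dist a c ≤ G.dist a b + G.dist b c :=
  hG.isConnected.dist_triangle

omit hG in
lemma mem_children_iff {u v : V} :
    u ∈ children G r v ↔ G.Adj v u ∧ G.dist r u = G.dist r v + 1 := by
  simp [children]

lemma child_subtree {u v x : V} (hc : u ∈ children G r v)
    (hx : x ∈ subtreeSet G r u) :
    x ∈ subtreeSet G r v ∧ G.dist v x = 1 + G.dist u x := by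
  obtain ⟨hadj, hd⟩ := mem_children_iff.mp hc
  have h1 : G.dist r x = G.dist r u + G.dist u x := hx
  have h2 : G.dist v x ≤ G.dist v u + G.dist u x := tri hG v u x
  have h3 : G.dist v u = 1 := dist_eq_one_iff_adj.mpr hadj
  have h4 : G.dist r x ≤ G.dist r v + G.dist v x := tri hG r v x
  constructor
  · show G.dist r x = G.dist r v + G.dist v x
    omega
  · omega

omit hG in
lemma root_not_mem_child_subtree {u v : V} (hc : u ∈ children G r v) :
    v ∉ subtreeSet G r u := by
  obtain ⟨hadj, hd⟩ := mem_children_iff.mp hc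
  intro h
  have h1 : G.dist r v = G.dist r u + G.dist u v := h
  omega

lemma child_eq_of_mem_subtree {u w v : V} (hu : u ∈ children G r v)
    (hw : w ∈ children G r v) (h : u ∈ subtreeSet G r w) : u = w := by
  obtain ⟨hadj, hd⟩ := mem_children_iff.mp hu
  obtain ⟨hadj', hd'⟩ := mem_children_iff.mp hw
  have h1 : G.dist r u = G.dist r w + G.dist w u := h
  have h2 : G.dist w u = 0 := by omega
  exact ((hG.isConnected w u).dist_eq_zero_iff.mp h2).symm

lemma subtree_cover {v x : V} (hx : x ∈ subtreeSet G r v) (hne : x ≠ v) :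
    ∃ u ∈ children G r v, x ∈ subtreeSet G r u := by
  have hx' : G.dist r x = G.dist r v + G.dist v x := hx
  have hpos : 0 < G.dist v x := (hG.isConnected v x).pos_dist_of_ne (Ne.symm hne)
  obtain ⟨p, hp⟩ := hG.isConnected.exists_walk_length_eq_dist v x
  cases p with
  | nil => rw [← hp] at hpos; simp at hpos
  | @cons _ w _ hadj q =>
    have hq : q.length + 1 = G.dist v x := by simpa using hp
    have h2 : G.dist w x ≤ q.length := dist_le q
    have h3 : G.dist v x ≤ G.dist v w + G.dist w x := tri hG v w x
    have h4 : G.dist v w = 1 := dist_eq_one_iff_adj.mpr hadj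
    have h6 : G.dist r w ≤ G.dist r v + 1 := by
      have := tri hG r v w; omega
    have h7 : G.dist r x ≤ G.dist r w + G.dist w x := tri hG r w x
    have h8 : G.dist r w = G.dist r v + 1 := by omega
    refine ⟨w, mem_children_iff.mpr ⟨hadj, h8⟩, ?_⟩
    show G.dist r x = G.dist r w + G.dist w x
    omega

lemma geodesic_support_subtree {u a : V} (ha : a ∈ subtreeSet G r u)
    (p : G.Walk u a) (hp : p.length = G.dist u a) :
    ∀ z ∈ p.support, z ∈ subtreeSet G r u := by
  intro z hz
  have h1 := congr_arg Walk.length (p.take_spec hz)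
  rw [Walk.length_append] at h1
  have h2 : G.dist u z ≤ (p.takeUntil z hz).length := dist_le _
  have h3 : G.dist z a ≤ (p.dropUntil z hz).length := dist_le _
  have h4 : G.dist u a ≤ G.dist u z + G.dist z a := tri hG u z a
  have h6 : G.dist r z ≤ G.dist r u + G.dist u z := tri hG r u z
  have h7 : G.dist r a ≤ G.dist r z + G.dist z a := tri hG r z a
  have h8 : G.dist r a = G.dist r u + G.dist u a := ha
  show G.dist r z = G.dist r u + G.dist u z
  omega

lemma child_path {u v x : V} (hc : u ∈ children G r v) (hx : x ∈ subtreeSet G r u) :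
    ∃ p : G.Walk v x, p.IsPath ∧ u ∈ p.support ∧
      ∀ z ∈ p.support, z = v ∨ z ∈ subtreeSet G r u := by
  obtain ⟨hadj, _⟩ := mem_children_iff.mp hc
  obtain ⟨q, hq⟩ := hG.isConnected.exists_walk_length_eq_dist u x
  refine ⟨Walk.cons hadj q, ?_, ?_, ?_⟩
  · apply Walk.isPath_of_length_eq_dist
    have h1 : (Walk.cons hadj q).length = 1 + G.dist u x := by
      simp [hq]; omega
    rw [h1, ← (child_subtree hG hc hx).2]
  · simp
  · intro z hz
    rw [Walk.support_cons, List.mem_cons] at hz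
    rcases hz with h | h
    · exact Or.inl h
    · exact Or.inr (geodesic_support_subtree hG hx q hq z h)

lemma subtree_disjoint {v u w x : V} (hu : u ∈ children G r v) (hw : w ∈ children G r v)
    (hne : u ≠ w) (hxu : x ∈ subtreeSet G r u) (hxw : x ∈ subtreeSet G r w) : False := by
  obtain ⟨p1, hp1, hup1, hsup1⟩ := child_path hG hu hxu
  obtain ⟨p2, hp2, hwp2, hsup2⟩ := child_path hG hw hxw
  have heq : p1 = p2 := (hG.existsUnique_path v x).unique hp1 hp2
  have hu2 : u ∈ p2.support := heq ▸ hup1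
  rcases hsup2 u hu2 with h | h
  · exact G.ne_of_adj (mem_children_iff.mp hu).1 h.symm
  · exact hne (child_eq_of_mem_subtree hG hu hw h)

lemma edge_lemma {v u a b : V} (hu : u ∈ children G r v) (ha : a ∈ subtreeSet G r u)
    (hb : b ∈ subtreeSet G r v) (hbu : b ∉ subtreeSet G r u) (hadj : G.Adj a b) :
    a = u ∧ b = v := by
  rcases eq_or_ne b v with rfl | hbv
  · refine ⟨?_, rfl⟩
    obtain ⟨hadj', hd⟩ := mem_children_iff.mp hu
    have h1 : G.dist r a = G.dist r u + G.dist u a := ha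
    have h2 : G.dist b a = 1 := dist_eq_one_iff_adj.mpr hadj.symm
    have h3 : G.dist r a ≤ G.dist r b + G.dist b a := tri hG r b a
    have h4 : G.dist u a = 0 := by omega
    exact ((hG.isConnected u a).dist_eq_zero_iff.mp h4).symm
  · exfalso
    obtain ⟨w, hw, hbw⟩ := subtree_cover hG hb hbv
    have hwu : w ≠ u := fun h => hbu (h ▸ hbw)
    obtain ⟨p1, hp1, hup1, hsup1⟩ := child_path hG hu ha
    obtain ⟨p2, hp2, hwp2, hsup2⟩ := child_path hG hw hbw
    have hbns : b ∉ p1.support := by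
      intro h
      rcases hsup1 b h with h' | h'
      · exact hbv h'
      · exact hbu h'
    have hconc : (p1.concat hadj).IsPath := by
      rw [Walk.isPath_def, Walk.support_concat]
      simp only [List.concat_eq_append, List.nodup_append, List.nodup_singleton]
      exact ⟨hp1.support_nodup, by
        refine ⟨trivial, ?_⟩; intro a ha b' hb' hab; rw [List.mem_singleton] at hb'; rw [hab, hb'] at ha; exact hbns ha⟩
    have heq : p1.concat hadj = p2 := (hG.existsUnique_path v b).unique hconc hp2
    have hu2 : u ∈ p2.support := by
      rw [← heq, Walk.support_concat]
      simp [hup1]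
    rcases hsup2 u hu2 with h | h
    · exact G.ne_of_adj (mem_children_iff.mp hu).1 h.symm
    · exact hwu.symm (child_eq_of_mem_subtree hG hu hw h)

lemma adj_mem_children {v y : V} (hadj : G.Adj v y) (hy : y ∈ subtreeSet G r v) :
    y ∈ children G r v := by
  have h1 : G.dist r y = G.dist r v + G.dist v y := hy
  have h2 : G.dist v y = 1 := dist_eq_one_iff_adj.mpr hadj
  exact mem_children_iff.mpr ⟨hadj, by omega⟩

lemma leaf_subtree {v : V} (hc : children G r v = ∅) : subtreeSet G r v = {v} := by
  ext x
  simp only [Set.mem_singleton_iff]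
  constructor
  · intro hx
    by_contra hne
    obtain ⟨u, hu, _⟩ := subtree_cover hG hx hne
    simp [hc] at hu
  · rintro rfl
    exact mem_subtree_self _



omit hG in
lemma coreSizes_bddAbove (v : V) : BddAbove (coreSizes G r v) := by
  refine ⟨Fintype.card V, ?_⟩
  rintro n ⟨X, -, -, -, -, rfl⟩
  simpa using X.card_le_univ

omit hG in
lemma mem_subtree_of_child {u v x : V} (hu : u ∈ children G r v)
    (hx : x ∈ subtreeSet G r u) (hG : G.IsTree) : x ∈ subtreeSet G r v :=
  (child_subtree hG hu hx).1

lemma child_mem_subtree {u v : V} (hu : u ∈ children G r v) :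
    u ∈ subtreeSet G r v := by
  obtain ⟨hadj, hd⟩ := mem_children_iff.mp hu
  have h2 : G.dist v u = 1 := dist_eq_one_iff_adj.mpr hadj
  show G.dist r u = G.dist r v + G.dist v u
  omega

lemma mem_of_branch_nonempty {v u : V} (hu : u ∈ children G r v) {X : Finset V}
    (hXs : (X : Set V) ⊆ subtreeSet G r v) (hvX : v ∈ X)
    (hconn : (G.induce (X : Set V)).Connected)
    {x : V} (hxX : x ∈ X) (hxu : x ∈ subtreeSet G r u) : u ∈ X := by
  set t : Set V := {z | z ∈ X ∧ z ∈ subtreeSet G r u} with ht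
  have hxt : x ∈ t := ⟨hxX, hxu⟩
  have hvt : (v : V) ∉ t := fun h => root_not_mem_child_subtree hu h.2
  obtain ⟨p⟩ := hconn.preconnected ⟨x, Finset.mem_coe.mpr hxX⟩ ⟨v, Finset.mem_coe.mpr hvX⟩
  obtain ⟨b, hbX, hbt, cc, hcX, hct, hadj⟩ := crossing_lemma _ _ p hxt hvt
  have hcu : cc ∉ subtreeSet G r u := fun h => hct ⟨Finset.mem_coe.mp hcX, h⟩
  obtain ⟨hbu, -⟩ := edge_lemma hG hu hbt.2 (hXs hcX) hcu hadj
  exact hbu ▸ (Finset.mem_coe.mp hbX)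

lemma child_core {v u : V} (hu : u ∈ children G r v) {X : Finset V}
    (hXs : (X : Set V) ⊆ subtreeSet G r v) (hvX : v ∈ X)
    (hconn : (G.induce (X : Set V)).Connected)
    (hbd : ∀ x ∈ X, ∃ y ∈ subtreeSet G r v, y ∉ X ∧ G.Adj x y)
    (hne : (X.filter (· ∈ subtreeSet G r u)).Nonempty) :
    (X.filter (· ∈ subtreeSet G r u)).card ∈ coreSizes G r u := by
  obtain ⟨x, hx⟩ := hne
  rw [Finset.mem_filter] at hx
  have huX : u ∈ X := mem_of_branch_nonempty hG hu hXs hvX hconn hx.1 hx.2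
  have huu : u ∈ subtreeSet G r u := mem_subtree_self u
  set F := X.filter (· ∈ subtreeSet G r u) with hF
  have hmemF : ∀ z, z ∈ F ↔ z ∈ X ∧ z ∈ subtreeSet G r u := by
    intro z; simp [hF]
  have huF : u ∈ F := (hmemF u).mpr ⟨huX, huu⟩
  have hedge : ∀ a ∈ (F : Set V), ∀ b ∈ (X : Set V), b ∉ (F : Set V) → G.Adj a b → a = u := by
    intro a ha b hb hbF hadj
    have haF := (hmemF a).mp (Finset.mem_coe.mp ha)
    have hbu : b ∉ subtreeSet G r u := fun h =>
      hbF (Finset.mem_coe.mpr ((hmemF b).mpr ⟨Finset.mem_coe.mp hb, h⟩))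
    exact (edge_lemma hG hu haF.2 (hXs hb) hbu hadj).1
  refine ⟨F, ?_, huF, ?_, ?_, rfl⟩
  · intro z hz
    exact ((hmemF z).mp (Finset.mem_coe.mp hz)).2
  · -- connectivity of induce F
    rw [connected_iff_exists_forall_reachable]
    refine ⟨⟨u, Finset.mem_coe.mpr huF⟩, ?_⟩
    rintro ⟨w, hw⟩
    have hwF := (hmemF w).mp (Finset.mem_coe.mp hw)
    obtain ⟨p⟩ := hconn.preconnected ⟨w, Finset.mem_coe.mpr hwF.1⟩ ⟨u, Finset.mem_coe.mpr huX⟩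
    exact (restrict_lemma (Finset.mem_coe.mpr huF) hedge _ _ p (Finset.mem_coe.mpr hw) rfl).symm
  · -- boundary
    intro z hz
    have hzF := (hmemF z).mp hz
    obtain ⟨y, hyv, hyX, hadj⟩ := hbd z hzF.1
    have hyu : y ∈ subtreeSet G r u := by
      by_contra hyu
      obtain ⟨-, hyv'⟩ := edge_lemma hG hu hzF.2 hyv hyu hadj
      exact hyX (hyv' ▸ hvX)
    exact ⟨y, hyu, fun h => hyX ((hmemF y).mp h).1, hadj⟩

lemma exists_empty_branch {v : V} {X : Finset V}
    (hXs : (X : Set V) ⊆ subtreeSet G r v) (hvX : v ∈ X)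
    (hconn : (G.induce (X : Set V)).Connected)
    (hbd : ∀ x ∈ X, ∃ y ∈ subtreeSet G r v, y ∉ X ∧ G.Adj x y) :
    ∃ u ∈ children G r v, X.filter (· ∈ subtreeSet G r u) = ∅ := by
  obtain ⟨y, hyv, hyX, hadj⟩ := hbd v hvX
  have hy : y ∈ children G r v := adj_mem_children hG hadj hyv
  refine ⟨y, hy, ?_⟩
  rw [Finset.filter_eq_empty_iff]
  intro x hx hxy
  exact hyX (mem_of_branch_nonempty hG hy hXs hvX hconn hx hxy)

lemma card_decomp {v : V} {X : Finset V}
    (hXs : (X : Set V) ⊆ subtreeSet G r v) (hvX : v ∈ X) :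
    X.card = 1 + ∑ u ∈ children G r v, (X.filter (· ∈ subtreeSet G r u)).card := by
  have hXeq : X = insert v ((children G r v).biUnion
      fun u => X.filter (· ∈ subtreeSet G r u)) := by
    ext x
    simp only [Finset.mem_insert, Finset.mem_biUnion, Finset.mem_filter]
    constructor
    · intro hx
      rcases eq_or_ne x v with rfl | hne
      · exact Or.inl rfl
      · obtain ⟨u, hu, hxu⟩ := subtree_cover hG (hXs (Finset.mem_coe.mpr hx)) hne
        exact Or.inr ⟨u, hu, hx, hxu⟩
    · rintro (rfl | ⟨u, hu, hx, -⟩)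
      · exact hvX
      · exact hx
  have hdisj : ∀ a ∈ children G r v, ∀ b ∈ children G r v, a ≠ b →
      Disjoint (X.filter (· ∈ subtreeSet G r a)) (X.filter (· ∈ subtreeSet G r b)) := by
    intro a ha b hb hab
    rw [Finset.disjoint_left]
    intro x hxa hxb
    rw [Finset.mem_filter] at hxa hxb
    exact subtree_disjoint hG ha hb hab hxa.2 hxb.2
  have hvnot : v ∉ (children G r v).biUnion fun u => X.filter (· ∈ subtreeSet G r u) := by
    simp only [Finset.mem_biUnion, Finset.mem_filter, not_exists]
    intro u hu
    exact root_not_mem_child_subtree hu.1 hu.2.2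
  conv_lhs => rw [hXeq]
  rw [Finset.card_insert_of_notMem hvnot, Finset.card_biUnion hdisj]
  omega

lemma core_assemble {v : V} {w0 : V} (hw0 : w0 ∈ children G r v)
    (Y : V → Finset V) (D : Finset V) (hD : D ⊆ (children G r v).erase w0)
    (hY : ∀ u ∈ D, (↑(Y u) : Set V) ⊆ subtreeSet G r u ∧ u ∈ Y u ∧
       (G.induce (↑(Y u) : Set V)).Connected ∧
       (∀ x ∈ Y u, ∃ y ∈ subtreeSet G r u, y ∉ Y u ∧ G.Adj x y)) :
    (1 + ∑ u ∈ D, (Y u).card) ∈ coreSizes G r v := by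
  have hDC : ∀ u ∈ D, u ∈ children G r v := fun u hu => Finset.mem_of_mem_erase (hD hu)
  have hDne : ∀ u ∈ D, u ≠ w0 := fun u hu => Finset.ne_of_mem_erase (hD hu)
  set X := insert v (D.biUnion Y) with hX
  have hmemX : ∀ z, z ∈ X ↔ z = v ∨ ∃ u ∈ D, z ∈ Y u := by
    intro z; simp [hX]
  have hXs : (X : Set V) ⊆ subtreeSet G r v := by
    intro z hz
    rcases (hmemX z).mp (Finset.mem_coe.mp hz) with rfl | ⟨u, hu, hzu⟩
    · exact mem_subtree_self z
    · exact (child_subtree hG (hDC u hu) ((hY u hu).1 (Finset.mem_coe.mpr hzu))).1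
  have hvX : v ∈ X := (hmemX v).mpr (Or.inl rfl)
  -- w0 not in X
  have hw0X : w0 ∉ X := by
    intro h
    rcases (hmemX w0).mp h with h1 | ⟨u, hu, h2⟩
    · exact G.ne_of_adj (mem_children_iff.mp hw0).1 h1.symm
    · exact hDne u hu
        (child_eq_of_mem_subtree hG hw0 (hDC u hu)
          ((hY u hu).1 (Finset.mem_coe.mpr h2))).symm
  refine ⟨X, hXs, hvX, ?_, ?_, ?_⟩
  · -- connectivity
    apply SimpleGraph.induce_connected_of_patches v (Finset.mem_coe.mpr hvX)
    intro z hz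
    rcases (hmemX z).mp (Finset.mem_coe.mp hz) with rfl | ⟨u, hu, hzu⟩
    · exact ⟨{z}, by simpa using hz, rfl, rfl, Reachable.refl _⟩
    · obtain ⟨hYs, huY, hYconn, -⟩ := hY u hu
      have hadj : G.Adj v u := (mem_children_iff.mp (hDC u hu)).1
      have hconn' : (G.induce ({v} ∪ (↑(Y u) : Set V))).Connected :=
        SimpleGraph.connected_induce_union (induce_singleton_connected v).preconnected
          hYconn.preconnected
          rfl (Finset.mem_coe.mpr huY) hadj
      refine ⟨{v} ∪ (↑(Y u) : Set V), ?_, Or.inl rfl, Or.inr (Finset.mem_coe.mpr hzu),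
        hconn'.preconnected _ _⟩
      intro a ha
      rcases ha with rfl | ha
      · exact Finset.mem_coe.mpr hvX
      · exact Finset.mem_coe.mpr ((hmemX a).mpr (Or.inr ⟨u, hu, Finset.mem_coe.mp ha⟩))
  · -- boundary
    intro z hz
    rcases (hmemX z).mp hz with rfl | ⟨u, hu, hzu⟩
    · refine ⟨w0, child_mem_subtree hG hw0, hw0X, (mem_children_iff.mp hw0).1⟩
    · obtain ⟨hYs, huY, -, hYbd⟩ := hY u hu
      obtain ⟨y, hyu, hyY, hadj⟩ := hYbd z hzu
      refine ⟨y, (child_subtree hG (hDC u hu) hyu).1, ?_, hadj⟩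
      intro hyX
      rcases (hmemX y).mp hyX with rfl | ⟨u', hu', hyu'⟩
      · exact root_not_mem_child_subtree (hDC u hu) hyu
      · rcases eq_or_ne u' u with rfl | hne
        · exact hyY hyu'
        · exact subtree_disjoint hG (hDC u' hu') (hDC u hu) hne
            ((hY u' hu').1 (Finset.mem_coe.mpr hyu')) hyu
  · -- cardinality
    have hvnot : v ∉ D.biUnion Y := by
      simp only [Finset.mem_biUnion, not_exists]
      intro u hu
      exact root_not_mem_child_subtree (hDC u hu.1)
        ((hY u hu.1).1 (Finset.mem_coe.mpr hu.2))
    have hdisj : ∀ a ∈ D, ∀ b ∈ D, a ≠ b → Disjoint (Y a) (Y b) := by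
      intro a ha b hb hab
      rw [Finset.disjoint_left]
      intro x hxa hxb
      exact subtree_disjoint hG (hDC a ha) (hDC b hb) hab
        ((hY a ha).1 (Finset.mem_coe.mpr hxa)) ((hY b hb).1 (Finset.mem_coe.mpr hxb))
    rw [hX, Finset.card_insert_of_notMem hvnot, Finset.card_biUnion hdisj]
    omega



end Tree

end CoreRecAux


theorem core_recursion {V : Type*} [Fintype V] (G : SimpleGraph V)
    (hG : G.IsTree) (r : V) (c : V → ℕ)
    (hleaf : ∀ v, children G r v = ∅ → c v = 0)
    (hrec : ∀ v (h : (children G r v).Nonempty),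
      c v = 1 + ∑ u ∈ children G r v, c u - (children G r v).inf' h c) :
    ∀ v : V, c v = sSup (coreSizes G r v) ∧
      ((coreSizes G r v).Nonempty → c v ∈ coreSizes G r v) := by
  classical
  have bdd : ∀ v : V, BddAbove (coreSizes G r v) := fun v => CoreRecAux.coreSizes_bddAbove v
  suffices key : ∀ (k : ℕ) (v : V), Fintype.card V - G.dist r v = k →
      (c v = sSup (coreSizes G r v) ∧
        ((coreSizes G r v).Nonempty → c v ∈ coreSizes G r v)) by
    intro v; exact key _ v rfl
  intro k
  induction k using Nat.strong_induction_on with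
  | _ k IH =>
  intro v hk
  by_cases hC : children G r v = ∅
  · have hsub := CoreRecAux.leaf_subtree hG hC
    have hempty : coreSizes G r v = ∅ := by
      ext n
      simp only [Set.mem_empty_iff_false, iff_false]
      rintro ⟨X, hXs, hvX, -, hbd, -⟩
      obtain ⟨y, hyv, hyX, -⟩ := hbd v hvX
      rw [hsub] at hyv
      have hyv' : y = v := hyv
      exact hyX (hyv' ▸ hvX)
    rw [hleaf v hC, hempty]
    constructor
    · rw [csSup_empty]; rfl
    · rintro ⟨n, hn⟩; simp at hn
  · have hCne : (children G r v).Nonempty := Finset.nonempty_iff_ne_empty.mpr hC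
    have hdlt : G.dist r v < Fintype.card V := by
      obtain ⟨p, hp, hlen⟩ := hG.isConnected.exists_path_of_dist r v
      rw [← hlen]; exact hp.length_lt
    have IHc : ∀ u ∈ children G r v,
        c u = sSup (coreSizes G r u) ∧
          ((coreSizes G r u).Nonempty → c u ∈ coreSizes G r u) := by
      intro u hu
      obtain ⟨-, hd⟩ := CoreRecAux.mem_children_iff.mp hu
      exact IH (Fintype.card V - G.dist r u) (by omega) u rfl
    have hub : ∀ u ∈ children G r v, ∀ n ∈ coreSizes G r u, n ≤ c u := by
      intro u hu n hn
      calc n ≤ sSup (coreSizes G r u) := le_csSup (bdd u) hn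
        _ = c u := ((IHc u hu).1).symm
    have hcmem : ∀ u ∈ children G r v, c u ≠ 0 → c u ∈ coreSizes G r u := by
      intro u hu h0
      refine (IHc u hu).2 ?_
      by_contra hne
      rw [Set.not_nonempty_iff_eq_empty] at hne
      exact h0 (by rw [(IHc u hu).1, hne, csSup_empty]; rfl)
    have hupper : ∀ n ∈ coreSizes G r v, n ≤ c v := by
      rintro n ⟨X, hXs, hvX, hconn, hbd, rfl⟩
      obtain ⟨y, hy, hyempty⟩ := CoreRecAux.exists_empty_branch hG hXs hvX hconn hbd
      have hdec := CoreRecAux.card_decomp hG hXs hvX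
      have hfle : ∀ u ∈ children G r v, (X.filter (· ∈ subtreeSet G r u)).card ≤ c u := by
        intro u hu
        rcases Finset.eq_empty_or_nonempty (X.filter (· ∈ subtreeSet G r u)) with he | hne
        · simp [he]
        · exact hub u hu _ (CoreRecAux.child_core hG hu hXs hvX hconn hbd hne)
      have h1 : ∑ u ∈ (children G r v).erase y, (X.filter (· ∈ subtreeSet G r u)).card
            + (X.filter (· ∈ subtreeSet G r y)).card
          = ∑ u ∈ children G r v, (X.filter (· ∈ subtreeSet G r u)).card :=
        Finset.sum_erase_add _ _ hy
      have h1' : (X.filter (· ∈ subtreeSet G r y)).card = 0 := by rw [hyempty]; rfl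
      have h2 : ∑ u ∈ (children G r v).erase y, (X.filter (· ∈ subtreeSet G r u)).card
          ≤ ∑ u ∈ (children G r v).erase y, c u :=
        Finset.sum_le_sum (fun u hu => hfle u (Finset.mem_of_mem_erase hu))
      have h3 : ∑ u ∈ (children G r v).erase y, c u + c y = ∑ u ∈ children G r v, c u :=
        Finset.sum_erase_add _ _ hy
      have h4 : (children G r v).inf' hCne c ≤ c y := Finset.inf'_le _ hy
      have h5 := hrec v hCne
      omega
    obtain ⟨w0, hw0, hinf⟩ := Finset.exists_mem_eq_inf' hCne c
    set D := ((children G r v).erase w0).filter (fun u => c u ≠ 0) with hD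
    have hDsub : D ⊆ (children G r v).erase w0 := Finset.filter_subset _ _
    have hprops : ∀ u ∈ D, ∃ Yu : Finset V, ((↑Yu : Set V) ⊆ subtreeSet G r u ∧ u ∈ Yu ∧
        (G.induce (↑Yu : Set V)).Connected ∧
        (∀ x ∈ Yu, ∃ y ∈ subtreeSet G r u, y ∉ Yu ∧ G.Adj x y))
        ∧ Yu.card = c u := by
      intro u hu
      have hu0 : c u ≠ 0 := (Finset.mem_filter.mp hu).2
      have huC : u ∈ children G r v := Finset.mem_of_mem_erase (Finset.mem_filter.mp hu).1
      obtain ⟨Yu, a, b2, c2, d2, e⟩ := hcmem u huC hu0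
      exact ⟨Yu, ⟨a, b2, c2, d2⟩, e⟩
    choose! Y hY1 hY2 using hprops
    have hmem0 := CoreRecAux.core_assemble hG hw0 Y D hDsub hY1
    have hcard : 1 + ∑ u ∈ D, (Y u).card = c v := by
      rw [Finset.sum_congr rfl hY2]
      have e2 : ∑ u ∈ D, c u = ∑ u ∈ (children G r v).erase w0, c u := by
        rw [hD]; exact Finset.sum_filter_ne_zero _
      have e3 : ∑ u ∈ (children G r v).erase w0, c u + c w0 = ∑ u ∈ children G r v, c u :=
        Finset.sum_erase_add _ _ hw0
      have e4 := hrec v hCne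
      rw [hinf] at e4
      rw [e2]
      rw [← e3] at e4
      omega
    rw [hcard] at hmem0
    have hne : (coreSizes G r v).Nonempty := ⟨c v, hmem0⟩
    exact ⟨le_antisymm (le_csSup (bdd v) hmem0) (csSup_le hne hupper), fun _ => hmem0⟩
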